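/- Let f : ℝⁿ × ℝ → ℝⁿ be continuously differentiable in its first (state) variable and continuous in its second (time) variable, let δ : ℝ → ℝⁿ be continuous, and let α₀ > 0. Assume that for all x ∈ ℝⁿ, all t ≥ t₀, and all v ∈ ℝⁿ, ⟪Dₓf(x,t) v, v⟫ ≤ −α₀ ‖v‖² (i.e. the Euclidean logarithmic norm of the Jacobian is ≤ −α₀). If x, x* : [t₀, ∞) → ℝⁿ are two differentiable functions satisfying x'(t) = f(x(t), t) + δ(t) and x*'(t) = f(x*(t), t) + δ(t) for all t ≥ t₀, then ‖x(t) − x*(t)‖ ≤ e^{−α₀ (t − t₀)} ‖x(t₀) − x*(t₀)‖ for all t ≥ t₀ (global incremental/exponential stability). -/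

import Mathlib

open Filter Topology
open scoped RealInnerProductSpace

/-- first part of Theorem 1. Under the logarithmic-norm bound
`μ[Dₓf(x,t)] ≤ -α₀ < 0` (stated as `⟪Dₓf(x,t)v, v⟫ ≤ -α₀‖v‖²` for all `v`),
any two solutions of `ẋ = f(x,t) + δ(t)` approach each other exponentially:
`‖x(t) - x*(t)‖ ≤ exp(-α₀(t - t₀)) ‖x(t₀) - x*(t₀)‖` (global incremental stability). -/
theorem global_incremental_stability {n : ℕ} (hn : 1 ≤ n) (t₀ : ℝ)
    (f : EuclideanSpace ℝ (Fin n) → ℝ → EuclideanSpace ℝ (Fin n))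
    (δ : ℝ → EuclideanSpace ℝ (Fin n))
    (hf : ∀ t, t₀ ≤ t → ContDiff ℝ 1 (fun y => f y t))
    (hft : ∀ y, ContinuousOn (fun t => f y t) (Set.Ici t₀))
    (hδ : Continuous δ)
    (α₀ : ℝ) (hα₀ : 0 < α₀)
    (hμ : ∀ (x : EuclideanSpace ℝ (Fin n)) (t : ℝ), t₀ ≤ t →
      ∀ v : EuclideanSpace ℝ (Fin n),
        ⟪fderiv ℝ (fun y => f y t) x v, v⟫ ≤ -α₀ * ‖v‖ ^ 2)
    (x xs : ℝ → EuclideanSpace ℝ (Fin n))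
    (hx : ∀ t, t₀ ≤ t → HasDerivAt x (f (x t) t + δ t) t)
    (hxs : ∀ t, t₀ ≤ t → HasDerivAt xs (f (xs t) t + δ t) t) :
    ∀ t, t₀ ≤ t → ‖x t - xs t‖ ≤ Real.exp (-α₀ * (t - t₀)) * ‖x t₀ - xs t₀‖ := by
  intro b hb
  set e : ℝ → EuclideanSpace ℝ (Fin n) := fun t => x t - xs t with he
  set e' : ℝ → EuclideanSpace ℝ (Fin n) := fun t => f (x t) t - f (xs t) t with he'
  have hde : ∀ t, t₀ ≤ t → HasDerivAt e (e' t) t := by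
    intro t ht
    have := (hx t ht).sub (hxs t ht)
    rw [add_sub_add_right_eq_sub] at this; exact this
  -- key pointwise bound via the mean value theorem along the segment
  have key : ∀ t, t₀ ≤ t → ⟪e' t, e t⟫ ≤ -α₀ * ‖e t‖ ^ 2 := by
    intro t ht
    set g : ℝ → ℝ := fun s => ⟪f (xs t + s • e t) t, e t⟫ with hg
    set g' : ℝ → ℝ := fun s =>
      ⟪fderiv ℝ (fun y => f y t) (xs t + s • e t) (e t), e t⟫ with hg'
    have hdg : ∀ s : ℝ, HasDerivAt g (g' s) s := by
      intro s
      have hc : HasDerivAt (fun s : ℝ => xs t + s • e t) (e t) s := by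
        simpa using ((hasDerivAt_id s).smul_const (e t)).const_add (xs t)
      have hF : HasFDerivAt (fun y => f y t)
          (fderiv ℝ (fun y => f y t) (xs t + s • e t)) (xs t + s • e t) :=
        ((hf t ht).differentiable one_ne_zero (xs t + s • e t)).hasFDerivAt
      have hcomp := hF.comp_hasDerivAt s hc
      have := hcomp.inner ℝ (hasDerivAt_const s (e t))
      simpa [hg, hg', real_inner_comm] using this
    by_cases hone : (0:ℝ) < 1
    · obtain ⟨c, hc, hceq⟩ := exists_hasDerivAt_eq_slope g g' hone
        (fun s _ => (hdg s).continuousAt.continuousWithinAt) (fun s _ => hdg s)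
      have h1 : g 1 - g 0 = g' c := by
        rw [hceq]; field_simp; ring
      have h2 : g 1 - g 0 = ⟪e' t, e t⟫ := by
        simp [hg, he, he', inner_sub_left]
      have h3 : g' c ≤ -α₀ * ‖e t‖ ^ 2 := hμ _ t ht (e t)
      linarith [h1, h2, h3]
    · norm_num at hone
  -- Grönwall on φ = ‖e‖²
  set φ : ℝ → ℝ := fun t => ⟪e t, e t⟫ with hφ
  have hdφ : ∀ t, t₀ ≤ t → HasDerivAt φ (2 * ⟪e' t, e t⟫) t := by
    intro t ht
    have := (hde t ht).inner ℝ (hde t ht)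
    have h2 : ⟪e t, e' t⟫ + ⟪e' t, e t⟫ = 2 * ⟪e' t, e t⟫ := by
      rw [real_inner_comm]; ring
    simpa only [hφ, h2] using this
  have hgron := le_gronwallBound_of_liminf_deriv_right_le
    (f := φ) (f' := fun t => 2 * ⟪e' t, e t⟫) (δ := φ t₀) (K := -2 * α₀) (ε := 0)
    (a := t₀) (b := b)
    (fun t ht => ((hdφ t ht.1).continuousAt).continuousWithinAt)
    (fun t ht r hr =>
      ((hdφ t ht.1).hasDerivWithinAt.liminf_right_slope_le hr).mono fun z hz => by
        simpa [slope_def_field, div_eq_inv_mul] using hz)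
    le_rfl
    (fun t ht => by
      have h1 := key t ht.1
      have h2 : φ t = ‖e t‖ ^ 2 := real_inner_self_eq_norm_sq (e t)
      show (2:ℝ) * ⟪e' t, e t⟫ ≤ -2 * α₀ * φ t + 0
      rw [h2]; linarith)
  have hb' : φ b ≤ φ t₀ * Real.exp (-2 * α₀ * (b - t₀)) := by
    have := hgron b ⟨hb, le_rfl⟩
    rwa [gronwallBound_ε0] at this
  -- take square roots
  have hφb : φ b = ‖e b‖ ^ 2 := real_inner_self_eq_norm_sq (e b)
  have hφ0 : φ t₀ = ‖e t₀‖ ^ 2 := real_inner_self_eq_norm_sq (e t₀)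
  have hsq : ‖e b‖ ^ 2 ≤ (Real.exp (-α₀ * (b - t₀)) * ‖e t₀‖) ^ 2 := by
    have hexp : Real.exp (-α₀ * (b - t₀)) ^ 2 = Real.exp (-2 * α₀ * (b - t₀)) := by
      rw [← Real.exp_nat_mul]; ring_nf
    calc ‖e b‖ ^ 2 = φ b := hφb.symm
      _ ≤ φ t₀ * Real.exp (-2 * α₀ * (b - t₀)) := hb'
      _ = (Real.exp (-α₀ * (b - t₀)) * ‖e t₀‖) ^ 2 := by
          rw [hφ0, mul_pow, hexp]; ring
  have hrhs : 0 ≤ Real.exp (-α₀ * (b - t₀)) * ‖e t₀‖ :=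
    mul_nonneg (Real.exp_pos _).le (norm_nonneg _)
  have hfin := Real.sqrt_le_sqrt hsq
  rw [Real.sqrt_sq (norm_nonneg _), Real.sqrt_sq hrhs] at hfin
  simpa [he] using hfin
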